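/- The zero-level set of the optimal constraint decay function under an uncertain model f̂, namely Z_{G*} = {(x,u) : G*_{f̂}(x,u) = 0}, equals the maximum feasible zone Z*(f̂): Z_{G*} is a feasible zone under f̂, and every feasible zone under f̂ is contained in Z_{G*}. -/

import Mathlib

open scoped ENat

/-- Projection of a zone onto the state space. -/
def projX {S A : Type*} (Z : Set (S × A)) : Set S := {x | ∃ u, (x, u) ∈ Z}

/-- A zone is feasible under an uncertain model. -/
def FeasibleZone {S A : Type*} (Xcstr : Set S) (fh : S × A → Set S)
    (Z : Set (S × A)) : Prop :=
  projX Z ⊆ Xcstr ∧ ∀ p ∈ Z, fh p ⊆ projX Z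

/-- A trajectory of the uncertain model `fh` starting from `(x₀, u)` and
following policy `π` afterwards. -/
def IsTraj {X U : Type*} (fh : X × U → Set X) (π : X → U) (x0 : X) (u : U)
    (traj : ℕ → X) : Prop :=
  traj 0 = x0 ∧ traj 1 ∈ fh (x0, u) ∧
    ∀ i : ℕ, 1 ≤ i → traj (i + 1) ∈ fh (traj i, π (traj i))

/-- First time `t` at which the constraint is violated (`h(x_t) > 0`), as an
extended natural number (`⊤` if the constraint is never violated). -/
noncomputable def firstViolation {X : Type*} (h : X → ℝ) (traj : ℕ → X) : ℕ∞ :=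
  sInf {t : ℕ∞ | ∃ n : ℕ, t = (n : ℕ∞) ∧ 0 < h (traj n)}

/-- `N*_{f̂}(x,u)`: maximal over policies, minimal over model trajectories,
first constraint-violation time. -/
noncomputable def Nstar {X U : Type*} (fh : X × U → Set X) (h : X → ℝ)
    (p : X × U) : ℕ∞ :=
  ⨆ π : X → U, ⨅ traj : {tr : ℕ → X // IsTraj fh π p.1 p.2 tr},
    firstViolation h traj.1

/-- `γ^n` for `n : ℕ∞`, with `γ^∞ := 0`. -/
noncomputable def gpow (γ : ℝ) (n : ℕ∞) : ℝ :=
  if n = ⊤ then 0 else γ ^ WithTop.untopD 0 n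

/-- The optimal constraint decay function `G*_{f̂}(x,u) = γ^{N*_{f̂}(x,u)}`. -/
noncomputable def Gstar {X U : Type*} (fh : X × U → Set X) (h : X → ℝ)
    (γ : ℝ) (p : X × U) : ℝ :=
  gpow γ (Nstar fh h p)

lemma gpow_eq_zero_iff {γ : ℝ} (hγ : 0 < γ) (n : ℕ∞) : gpow γ n = 0 ↔ n = ⊤ := by
  unfold gpow
  split
  · simp_all
  · next hn =>
    simp only [hn, iff_false]
    exact pow_ne_zero _ (ne_of_gt hγ)

lemma firstViolation_eq_top_iff {X : Type*} (h : X → ℝ) (tr : ℕ → X) :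
    firstViolation h tr = ⊤ ↔ ∀ n, h (tr n) ≤ 0 := by
  unfold firstViolation
  rw [sInf_eq_top]
  constructor
  · intro H n
    by_contra hc
    push_neg at hc
    exact (WithTop.coe_ne_top (a := n)) (H _ ⟨n, rfl, hc⟩)
  · rintro H t ⟨n, rfl, hn⟩
    exact absurd hn (not_lt.mpr (H n))

/-- A canonical trajectory built by choice. -/
noncomputable def mkTraj {X U : Type*} (fh : X × U → Set X)
    (hne : ∀ p, (fh p).Nonempty) (π : X → U) (x : X) (u : U) : ℕ → X
  | 0 => x
  | n + 1 => (hne (mkTraj fh hne π x u n,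
      if n = 0 then u else π (mkTraj fh hne π x u n))).some

lemma isTraj_mkTraj {X U : Type*} (fh : X × U → Set X)
    (hne : ∀ p, (fh p).Nonempty) (π : X → U) (x : X) (u : U) :
    IsTraj fh π x u (mkTraj fh hne π x u) := by
  refine ⟨rfl, ?_, ?_⟩
  · show (hne (mkTraj fh hne π x u 0, if 0 = 0 then u else _)).some ∈ _
    simp only [if_pos rfl]
    exact (hne _).some_mem
  · intro i hi
    show (hne (mkTraj fh hne π x u i, if i = 0 then u else π (mkTraj fh hne π x u i))).some ∈ _
    rw [if_neg (by omega)]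
    exact (hne _).some_mem

theorem gstar_zero_level_set_eq_max_feasible_zone {X U : Type*}
    [Fintype X] [Fintype U] [Nonempty X] [Nonempty U]
    (fh : X × U → Set X) (hne : ∀ p, (fh p).Nonempty)
    (h : X → ℝ) (γ : ℝ) (hγ : γ ∈ Set.Ioo (0 : ℝ) 1) :
    FeasibleZone {x | h x ≤ 0} fh {p | Gstar fh h γ p = 0} ∧
      ∀ Z : Set (X × U), FeasibleZone {x | h x ≤ 0} fh Z →
        Z ⊆ {p | Gstar fh h γ p = 0} := by
  classical
  have hG0 : ∀ p, Gstar fh h γ p = 0 ↔ Nstar fh h p = ⊤ := fun p =>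
    gpow_eq_zero_iff hγ.1 _
  -- from Nstar = ⊤ extract an optimal policy
  have hNpol : ∀ p : X × U, Nstar fh h p = ⊤ →
      ∃ π : X → U, ∀ tr : ℕ → X, IsTraj fh π p.1 p.2 tr →
        firstViolation h tr = ⊤ := by
    intro p hp
    obtain ⟨π, hπ⟩ := Finite.exists_max
      (fun π : X → U => ⨅ traj : {tr : ℕ → X // IsTraj fh π p.1 p.2 tr},
        firstViolation h traj.1)
    have htop : (⨅ traj : {tr : ℕ → X // IsTraj fh π p.1 p.2 tr},
        firstViolation h traj.1) = ⊤ := by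
      have : Nstar fh h p ≤ _ := iSup_le hπ
      rw [hp] at this
      exact top_le_iff.mp this
    exact ⟨π, fun tr htr => iInf_eq_top.mp htop ⟨tr, htr⟩⟩
  have hNtop : ∀ (p : X × U) (π : X → U),
      (∀ tr : ℕ → X, IsTraj fh π p.1 p.2 tr → firstViolation h tr = ⊤) →
      Nstar fh h p = ⊤ := by
    intro p π hπ
    refine top_le_iff.mp (le_trans ?_ (le_iSup _ π))
    exact le_of_eq (iInf_eq_top.mpr (fun tr : {tr : ℕ → X // IsTraj fh π p.1 p.2 tr} => hπ tr.1 tr.2)).symm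
  constructor
  · constructor
    · rintro x ⟨u, hu⟩
      rw [Set.mem_setOf_eq, hG0] at hu
      obtain ⟨π, hπ⟩ := hNpol (x, u) hu
      have h1 := hπ _ (isTraj_mkTraj fh hne π x u)
      have := (firstViolation_eq_top_iff h _).mp h1 0
      exact this
    · rintro ⟨x, u⟩ hp x' hx'
      rw [Set.mem_setOf_eq, hG0] at hp
      obtain ⟨π, hπ⟩ := hNpol (x, u) hp
      refine ⟨π x', ?_⟩
      rw [Set.mem_setOf_eq, hG0]
      refine hNtop (x', π x') π ?_
      intro tr' htr'
      -- extend tr' to a trajectory from (x,u)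
      set tr : ℕ → X := fun n => Nat.casesOn n x (fun m => tr' m) with htrdef
      have htr : IsTraj fh π x u tr := by
        refine ⟨rfl, ?_, ?_⟩
        · show tr' 0 ∈ fh (x, u)
          rw [htr'.1]; exact hx'
        · intro i hi
          cases i with
          | zero => omega
          | succ m =>
            show tr' (m + 1) ∈ fh (tr' m, π (tr' m))
            rcases Nat.eq_zero_or_pos m with hm | hm
            · subst hm
              simpa [htr'.1] using htr'.2.1
            · exact htr'.2.2 m hm
      have h1 := (firstViolation_eq_top_iff h tr).mp (hπ tr htr)
      rw [firstViolation_eq_top_iff]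
      intro n
      exact h1 (n + 1)
  · intro Z hZ p hp
    rw [Set.mem_setOf_eq, hG0]
    set π : X → U := fun x => if hx : x ∈ projX Z then hx.choose
      else Classical.arbitrary U with hπdef
    have hπZ : ∀ x (hx : x ∈ projX Z), (x, π x) ∈ Z := by
      intro x hx
      simp only [hπdef, dif_pos hx]
      exact hx.choose_spec
    refine hNtop p π ?_
    intro tr htr
    have hmem : ∀ n, tr n ∈ projX Z := by
      intro n
      induction n with
      | zero => rw [htr.1]; exact ⟨p.2, hp⟩
      | succ m ih =>
        rcases Nat.eq_zero_or_pos m with hm | hm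
        · subst hm
          exact hZ.2 p hp htr.2.1
        · exact hZ.2 _ (hπZ _ ih) (htr.2.2 m hm)
    rw [firstViolation_eq_top_iff]
    exact fun n => hZ.1 (hmem n)
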